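/- Let F be a field and let (g₁, g₂) ∈ GL₂(F) × GL₂(F) with det g₁ = det g₂. Then g₁ E₁₁ g₂⁻¹ = E₁₁ and g₁ w g₂⁻¹ = w hold if and only if there exist a ∈ F× and b ∈ F such that g₁ = [[a, b],[0, a]] and g₂ = [[a, 0],[−b, a]] (equivalently, g₂ = w⁻¹ g₁ w). In other words, the stabilizer of the pair (E₁₁, w) in H₁(F) consists of the pairs (u, w⁻¹ u w) where u ranges over the invertible upper-triangular matrices with equal diagonal entries. -/
import Mathlib


open Matrix

theorem stmt_4 (F : Type*) [Field F] (g₁ g₂ : Matrix (Fin 2) (Fin 2) F)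
    (hg₁ : IsUnit g₁.det) (hg₂ : IsUnit g₂.det) (hdet : g₁.det = g₂.det) :
    (g₁ * !![1,0;0,0] * g₂⁻¹ = !![1,0;0,0] ∧ g₁ * !![0,1;-1,0] * g₂⁻¹ = !![0,1;-1,0]) ↔
    ∃ (a b : F), a ≠ 0 ∧ g₁ = !![a,b;0,a] ∧ g₂ = !![a,0;-b,a] := by
  constructor
  · rintro ⟨h1, h2⟩
    have e1 : g₁ * !![1,0;0,0] = !![1,0;0,0] * g₂ := by
      have := congrArg (· * g₂) h1
      simpa [mul_assoc, Matrix.nonsing_inv_mul g₂ hg₂] using this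
    have e2 : g₁ * !![0,1;-1,0] = !![0,1;-1,0] * g₂ := by
      have := congrArg (· * g₂) h2
      simpa [mul_assoc, Matrix.nonsing_inv_mul g₂ hg₂] using this
    have q1 := congrFun (congrFun e1 0) 0
    have q2 := congrFun (congrFun e1 0) 1
    have q3 := congrFun (congrFun e1 1) 0
    have q5 := congrFun (congrFun e2 0) 0
    have q6 := congrFun (congrFun e2 0) 1
    have q7 := congrFun (congrFun e2 1) 0
    have q8 := congrFun (congrFun e2 1) 1
    simp [Matrix.mul_apply, Fin.sum_univ_two] at q1 q2 q3 q5 q6 q7 q8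
    refine ⟨g₁ 0 0, g₁ 0 1, ?_, ?_, ?_⟩
    · intro ha
      have hdet1 : g₁.det = g₁ 0 0 * g₁ 1 1 - g₁ 0 1 * g₁ 1 0 := by
        rw [Matrix.det_fin_two]
      rw [hdet1, ha, q3] at hg₁
      simp at hg₁
    · ext i j
      fin_cases i <;> fin_cases j <;>
        simp [q3, ← q6, q7, ← q1]
    · ext i j
      fin_cases i <;> fin_cases j <;>
        simp [← q1, ← q2, ← q5, ← q6, ← q7, ← q8, q3]
  · rintro ⟨a, b, ha, rfl, rfl⟩
    have e1 : (!![a,b;0,a] : Matrix (Fin 2) (Fin 2) F) * !![1,0;0,0] = !![1,0;0,0] * !![a,0;-b,a] := by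
      ext i j
      fin_cases i <;> fin_cases j <;> simp [Matrix.mul_apply, Fin.sum_univ_two]
    have e2 : (!![a,b;0,a] : Matrix (Fin 2) (Fin 2) F) * !![0,1;-1,0] = !![0,1;-1,0] * !![a,0;-b,a] := by
      ext i j
      fin_cases i <;> fin_cases j <;> simp [Matrix.mul_apply, Fin.sum_univ_two]
    constructor
    · rw [e1, mul_assoc, Matrix.mul_nonsing_inv _ hg₂, mul_one]
    · rw [e2, mul_assoc, Matrix.mul_nonsing_inv _ hg₂, mul_one]
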